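/- Suppose a, b, c are C¹ functions near ρ = 0 satisfying 2bca' = b² − a² + c² and 2acb' = a² − b² + c², with expansions a = αρ + O(ρ²), b = βρ + O(ρ²), c = γρ + O(ρ²) for positive constants α, β, γ (a 'nut'). Then β = α and γ = 2α². -/

import Mathlib

open Asymptotics Filter

private lemma ratio_tendsto {f : ℝ → ℝ} {k : ℝ}
    (h : (fun ρ => f ρ - k * ρ) =O[nhdsWithin 0 (Set.Ioi 0)] fun ρ => ρ ^ 2) :
    Filter.Tendsto (fun ρ => f ρ / ρ) (nhdsWithin 0 (Set.Ioi 0)) (nhds k) := by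
  have h2 : (fun ρ : ℝ => f ρ / ρ - k) =O[nhdsWithin 0 (Set.Ioi 0)] fun ρ => ρ := by
    have := h.mul (isBigO_refl (fun ρ : ℝ => ρ⁻¹) (nhdsWithin 0 (Set.Ioi 0)))
    refine (IsBigO.congr' this ?_ ?_)
    · filter_upwards [self_mem_nhdsWithin] with ρ (hρ : (0:ℝ) < ρ)
      field_simp
    · filter_upwards [self_mem_nhdsWithin] with ρ (hρ : (0:ℝ) < ρ)
      field_simp [sq]
  have h3 : Filter.Tendsto (fun ρ : ℝ => f ρ / ρ - k) (nhdsWithin 0 (Set.Ioi 0)) (nhds 0) :=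
    h2.trans_tendsto (tendsto_nhdsWithin_of_tendsto_nhds tendsto_id)
  have := h3.add_const k
  simpa using this

/-- Lemma 3.4 (nut expansion): if `a, b, c` are `C¹` solutions of the Kähler ODE system
near `ρ = 0` with `a = αρ + O(ρ²)`, `b = βρ + O(ρ²)`, `c = γρ + O(ρ²)` for positive
constants `α, β, γ`, then `β = α` and `γ = 2α²`. -/
theorem stmt_12 (ε α β γ : ℝ) (hε : 0 < ε) (hα : 0 < α) (hβ : 0 < β) (hγ : 0 < γ)
    (a b c a' b' : ℝ → ℝ)
    (hda : ∀ ρ ∈ Set.Ioo (0 : ℝ) ε, HasDerivAt a (a' ρ) ρ)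
    (hdb : ∀ ρ ∈ Set.Ioo (0 : ℝ) ε, HasDerivAt b (b' ρ) ρ)
    (hda' : ContinuousOn a' (Set.Ioo 0 ε))
    (hdb' : ContinuousOn b' (Set.Ioo 0 ε))
    (hode1 : ∀ ρ ∈ Set.Ioo (0 : ℝ) ε,
      2 * b ρ * c ρ * a' ρ = (b ρ) ^ 2 - (a ρ) ^ 2 + (c ρ) ^ 2)
    (hode2 : ∀ ρ ∈ Set.Ioo (0 : ℝ) ε,
      2 * a ρ * c ρ * b' ρ = (a ρ) ^ 2 - (b ρ) ^ 2 + (c ρ) ^ 2)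
    (hea : (fun ρ => a ρ - α * ρ) =O[nhdsWithin 0 (Set.Ioi 0)] fun ρ => ρ ^ 2)
    (heb : (fun ρ => b ρ - β * ρ) =O[nhdsWithin 0 (Set.Ioi 0)] fun ρ => ρ ^ 2)
    (hec : (fun ρ => c ρ - γ * ρ) =O[nhdsWithin 0 (Set.Ioi 0)] fun ρ => ρ ^ 2) :
    β = α ∧ γ = 2 * α ^ 2 := by
  have l := nhdsWithin (0:ℝ) (Set.Ioi 0)
  have hra : Filter.Tendsto (fun ρ => a ρ / ρ) (nhdsWithin 0 (Set.Ioi 0)) (nhds α) :=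
    ratio_tendsto hea
  have hrb : Filter.Tendsto (fun ρ => b ρ / ρ) (nhdsWithin 0 (Set.Ioi 0)) (nhds β) :=
    ratio_tendsto heb
  have hrc : Filter.Tendsto (fun ρ => c ρ / ρ) (nhdsWithin 0 (Set.Ioi 0)) (nhds γ) :=
    ratio_tendsto hec
  -- eventually in Ioo 0 ε
  have hIoo : ∀ᶠ ρ in nhdsWithin 0 (Set.Ioi 0), ρ ∈ Set.Ioo (0:ℝ) ε := by
    filter_upwards [self_mem_nhdsWithin, Ioo_mem_nhdsGT_of_mem ⟨le_refl (0:ℝ), hε⟩] with ρ h1 h2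
    exact ⟨h1, h2.2⟩
  -- positivity of b, c eventually
  have hbpos : ∀ᶠ ρ in nhdsWithin 0 (Set.Ioi 0), 0 < b ρ := by
    have : ∀ᶠ ρ in nhdsWithin 0 (Set.Ioi 0), 0 < b ρ / ρ :=
      hrb.eventually (eventually_gt_nhds hβ)
    filter_upwards [this, self_mem_nhdsWithin] with ρ h1 (h2 : (0:ℝ) < ρ)
    exact (div_pos_iff.mp h1).resolve_right (fun h => absurd h2 (not_lt.mpr h.2.le)) |>.1
  have hcpos : ∀ᶠ ρ in nhdsWithin 0 (Set.Ioi 0), 0 < c ρ := by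
    have : ∀ᶠ ρ in nhdsWithin 0 (Set.Ioi 0), 0 < c ρ / ρ :=
      hrc.eventually (eventually_gt_nhds hγ)
    filter_upwards [this, self_mem_nhdsWithin] with ρ h1 (h2 : (0:ℝ) < ρ)
    exact (div_pos_iff.mp h1).resolve_right (fun h => absurd h2 (not_lt.mpr h.2.le)) |>.1
  have hapos : ∀ᶠ ρ in nhdsWithin 0 (Set.Ioi 0), 0 < a ρ := by
    have : ∀ᶠ ρ in nhdsWithin 0 (Set.Ioi 0), 0 < a ρ / ρ :=
      hra.eventually (eventually_gt_nhds hα)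
    filter_upwards [this, self_mem_nhdsWithin] with ρ h1 (h2 : (0:ℝ) < ρ)
    exact (div_pos_iff.mp h1).resolve_right (fun h => absurd h2 (not_lt.mpr h.2.le)) |>.1
  -- a' tends to La
  have key : ∀ (f f' g : ℝ → ℝ) (kf kg : ℝ),
      (∀ ρ ∈ Set.Ioo (0:ℝ) ε, 2 * g ρ * c ρ * f' ρ = (g ρ)^2 - (f ρ)^2 + (c ρ)^2) →
      Filter.Tendsto (fun ρ => f ρ / ρ) (nhdsWithin 0 (Set.Ioi 0)) (nhds kf) →
      Filter.Tendsto (fun ρ => g ρ / ρ) (nhdsWithin 0 (Set.Ioi 0)) (nhds kg) →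
      (∀ᶠ ρ in nhdsWithin 0 (Set.Ioi 0), 0 < g ρ) →
      (0 < kg) →
      Filter.Tendsto f' (nhdsWithin 0 (Set.Ioi 0))
        (nhds ((kg^2 - kf^2 + γ^2) / (2 * kg * γ))) := by
    intro f f' g kf kg hode hf hg hgpos hkg
    have hnum : Filter.Tendsto (fun ρ => (g ρ / ρ)^2 - (f ρ / ρ)^2 + (c ρ / ρ)^2)
        (nhdsWithin 0 (Set.Ioi 0)) (nhds (kg^2 - kf^2 + γ^2)) :=
      ((hg.pow 2).sub (hf.pow 2)).add (hrc.pow 2)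
    have hden : Filter.Tendsto (fun ρ => 2 * (g ρ / ρ) * (c ρ / ρ))
        (nhdsWithin 0 (Set.Ioi 0)) (nhds (2 * kg * γ)) :=
      ((hg.const_mul 2).mul hrc)
    have hden_ne : (2 * kg * γ) ≠ 0 := by positivity
    have := hnum.div hden hden_ne
    refine this.congr' ?_
    filter_upwards [hIoo, hgpos, hcpos, self_mem_nhdsWithin] with ρ h1 h2 h3 (h4 : (0:ℝ) < ρ)
    have hode' := hode ρ h1
    have h2' : g ρ ≠ 0 := ne_of_gt h2
    have h3' : c ρ ≠ 0 := ne_of_gt h3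
    have h4' : ρ ≠ 0 := ne_of_gt h4
    simp only [Pi.div_apply]
    field_simp
    nlinarith [hode', sq_nonneg ρ]
  have hLa := key a a' b α β hode1 hra hrb hbpos hβ
  have hLb := key b b' a β α hode2 hrb hra hapos hα
  -- f tends to 0
  have hto0 : ∀ (f : ℝ → ℝ) (kf : ℝ),
      Filter.Tendsto (fun ρ => f ρ / ρ) (nhdsWithin 0 (Set.Ioi 0)) (nhds kf) →
      Filter.Tendsto f (nhdsWithin 0 (Set.Ioi 0)) (nhds 0) := by
    intro f kf hf
    have : Filter.Tendsto (fun ρ => (f ρ / ρ) * ρ) (nhdsWithin 0 (Set.Ioi 0)) (nhds (kf * 0)) :=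
      hf.mul (tendsto_nhdsWithin_of_tendsto_nhds tendsto_id)
    rw [mul_zero] at this
    refine this.congr' ?_
    filter_upwards [self_mem_nhdsWithin] with ρ (hρ : (0:ℝ) < ρ)
    field_simp
  -- L'Hopital
  have hlhop : ∀ (f f' : ℝ → ℝ) (L : ℝ),
      (∀ ρ ∈ Set.Ioo (0:ℝ) ε, HasDerivAt f (f' ρ) ρ) →
      Filter.Tendsto f (nhdsWithin 0 (Set.Ioi 0)) (nhds 0) →
      Filter.Tendsto f' (nhdsWithin 0 (Set.Ioi 0)) (nhds L) →
      Filter.Tendsto (fun ρ => f ρ / ρ) (nhdsWithin 0 (Set.Ioi 0)) (nhds L) := by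
    intro f f' L hd h0 hL
    exact HasDerivAt.lhopital_zero_right_on_Ioo hε hd
      (fun x _ => hasDerivAt_id x) (fun x _ => one_ne_zero)
      h0 (tendsto_nhdsWithin_of_tendsto_nhds tendsto_id)
      (by simpa using hL)
  have ha0 := hto0 a α hra
  have hb0 := hto0 b β hrb
  have e1 : (β^2 - α^2 + γ^2) / (2 * β * γ) = α :=
    tendsto_nhds_unique (hlhop a a' _ hda ha0 hLa) hra
  have e2 : (α^2 - β^2 + γ^2) / (2 * α * γ) = β :=
    tendsto_nhds_unique (hlhop b b' _ hdb hb0 hLb) hrb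
  have hβγ : (2 : ℝ) * β * γ ≠ 0 := by positivity
  have hαγ : (2 : ℝ) * α * γ ≠ 0 := by positivity
  have e1' : β^2 - α^2 + γ^2 = α * (2 * β * γ) := by
    field_simp at e1; linarith
  have e2' : α^2 - β^2 + γ^2 = β * (2 * α * γ) := by
    field_simp at e2; linarith
  have hβα : β = α := by nlinarith
  constructor
  · exact hβα
  · subst hβα
    nlinarith
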